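/- Let E be a real inner product space with dim E ≥ 2 and G an abelian group. If f : E → G satisfies f(x+y) = f(x) + f(y) for all x, y ∈ E with ⟨x,y⟩ = 0, then there exist additive maps a : ℝ → G and b : E → G such that f(x) = a(‖x‖²) + b(x) for all x ∈ E. -/

import Mathlib

open scoped RealInnerProductSpace

theorem orthogonally_additive_form {E : Type*} [NormedAddCommGroup E]
    [InnerProductSpace ℝ E] (hdim : 2 ≤ Module.rank ℝ E)
    {G : Type*} [AddCommGroup G] (f : E → G)
    (hf : ∀ x y : E, ⟪x, y⟫ = 0 → f (x + y) = f x + f y) :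
    ∃ (a : ℝ → G) (b : E → G),
      (∀ s t : ℝ, a (s + t) = a s + a t) ∧
      (∀ x y : E, b (x + y) = b x + b y) ∧
      ∀ x : E, f x = a (‖x‖ ^ 2) + b x := by
  -- f 0 = 0
  have h0 : f 0 = 0 := by
    have h := hf 0 0 (by simp)
    simp only [add_zero] at h
    exact (left_eq_add.mp h)
  -- orthogonal vectors of any norm
  have hOr : ∀ (x : E) (r : ℝ), 0 ≤ r → ∃ v : E, ⟪x, v⟫ = 0 ∧ ‖v‖ = r := by
    intro x r hr
    obtain ⟨z, hz0, hzx⟩ : ∃ z : E, z ≠ 0 ∧ ⟪x, z⟫ = 0 := by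
      obtain ⟨w, hw⟩ : ∃ w : E, w ∉ Submodule.span ℝ ({x} : Set E) := by
        by_contra hcon
        push_neg at hcon
        have htop : Submodule.span ℝ ({x} : Set E) = ⊤ :=
          Submodule.eq_top_iff'.mpr hcon
        have h1 : Module.rank ℝ E ≤ 1 := by
          have h2 := rank_span_le (R := ℝ) ({x} : Set E)
          rw [htop] at h2
          simpa using h2
        exact absurd (hdim.trans h1) (by norm_num)
      by_cases hx : x = 0
      · exact ⟨w, fun h => hw (h ▸ Submodule.zero_mem _), by simp [hx]⟩
      · have hxn : (‖x‖ : ℝ) ≠ 0 := norm_ne_zero_iff.mpr hx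
        refine ⟨w - (⟪x, w⟫ / ‖x‖ ^ 2) • x, ?_, ?_⟩
        · intro h
          exact hw (Submodule.mem_span_singleton.mpr
            ⟨⟪x, w⟫ / ‖x‖ ^ 2, (sub_eq_zero.mp h).symm⟩)
        · rw [inner_sub_right, real_inner_smul_right, real_inner_self_eq_norm_sq]
          field_simp
          ring
    refine ⟨(r / ‖z‖) • z, ?_, ?_⟩
    · rw [real_inner_smul_right, hzx, mul_zero]
    · rw [norm_smul, Real.norm_eq_abs, abs_of_nonneg (div_nonneg hr (norm_nonneg z)),
        div_mul_cancel₀ _ (norm_ne_zero_iff.mpr hz0)]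
  -- even part depends only on the norm
  have geq : ∀ u v : E, ‖u‖ = ‖v‖ → f u + f (-u) = f v + f (-v) := by
    intro u v huv
    set p := (2⁻¹ : ℝ) • (u + v) with hp
    set q := (2⁻¹ : ℝ) • (u - v) with hq
    have hpq : ⟪p, q⟫ = 0 := by
      simp only [hp, hq, real_inner_smul_left, real_inner_smul_right, inner_add_left,
        inner_sub_right, real_inner_self_eq_norm_sq]
      rw [real_inner_comm v u, huv]
      ring
    have hu : u = p + q := by rw [hp, hq]; module
    have hv2 : v = p + (-q) := by rw [hp, hq]; module
    have h1 := hf p q hpq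
    have h2 := hf p (-q) (by rw [inner_neg_right, hpq, neg_zero])
    have h3 := hf (-p) (-q) (by rw [inner_neg_neg, hpq])
    have h4 := hf (-p) q (by rw [inner_neg_left, hpq, neg_zero])
    have e1 : f u = f p + f q := by rw [hu]; exact h1
    have e2 : f (-u) = f (-p) + f (-q) := by rw [hu, neg_add]; exact h3
    have e3 : f v = f p + f (-q) := by rw [hv2]; exact h2
    have e4 : f (-v) = f (-p) + f q := by rw [hv2, neg_add, neg_neg]; exact h4
    rw [e1, e2, e3, e4]; abel
  -- choice of representative vectors
  have hY : ∀ s : ℝ, ∃ y : E, ‖y‖ ^ 2 = max s 0 := by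
    intro s
    obtain ⟨v, -, hv⟩ := hOr 0 (Real.sqrt (max s 0)) (Real.sqrt_nonneg _)
    exact ⟨v, by rw [hv, Real.sq_sqrt (le_max_right s 0)]⟩
  choose Y hYn using hY
  set A : ℝ → G := fun s => f (Y s) + f (-(Y s)) with hA
  have normY : ∀ s : ℝ, 0 ≤ s → ‖Y s‖ ^ 2 = s := fun s hs => by
    rw [hYn s, max_eq_left hs]
  have gA : ∀ u : E, f u + f (-u) = A (‖u‖ ^ 2) := by
    intro u
    apply geq
    have h1 : ‖Y (‖u‖ ^ 2)‖ ^ 2 = ‖u‖ ^ 2 := normY _ (sq_nonneg _)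
    have h2 := congrArg Real.sqrt h1
    rw [Real.sqrt_sq (norm_nonneg _), Real.sqrt_sq (norm_nonneg _)] at h2
    exact h2.symm
  have Azero : ∀ s : ℝ, s ≤ 0 → A s = 0 := by
    intro s hs
    have hy0 : Y s = 0 := by
      have h1 : ‖Y s‖ ^ 2 = 0 := by rw [hYn s, max_eq_right hs]
      have := pow_eq_zero_iff (n := 2) (by norm_num) |>.mp h1
      exact norm_eq_zero.mp this
    simp [hA, hy0, h0]
  have Aadd : ∀ s t : ℝ, 0 ≤ s → 0 ≤ t → A (s + t) = A s + A t := by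
    intro s t hs ht
    obtain ⟨v, hv0, hvn⟩ := hOr (Y s) (Real.sqrt t) (Real.sqrt_nonneg t)
    have hvsq : ‖v‖ ^ 2 = t := by rw [hvn, Real.sq_sqrt ht]
    have hsum : ‖Y s + v‖ ^ 2 = s + t := by
      rw [norm_add_sq_real, hv0, normY s hs, hvsq]; ring
    have e1 : f (Y s + v) + f (-(Y s + v)) = A (s + t) := by
      have := gA (Y s + v); rwa [hsum] at this
    have e2 := hf (Y s) v hv0
    have e3 := hf (-(Y s)) (-v) (by rw [inner_neg_neg, hv0])
    have e4 : f (Y s) + f (-(Y s)) = A s := by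
      have h9 := gA (Y s)
      rw [normY s hs] at h9
      try exact h9
    have e5 : f v + f (-v) = A t := by
      have := gA v; rwa [hvsq] at this
    rw [← e1, e2, neg_add, e3, ← e4, ← e5]; abel
  have Amax : ∀ s : ℝ, A s = A (max s 0) := by
    intro s
    rcases le_total s 0 with h | h
    · rw [Azero s h, max_eq_right h, Azero 0 le_rfl]
    · rw [max_eq_left h]
  set Aext : ℝ → G := fun s => A s - A (-s) with hAe
  have AextEq : ∀ s : ℝ, 0 ≤ s → Aext s = A s := by
    intro s hs
    simp only [hAe]
    rw [Azero (-s) (neg_nonpos_of_nonneg hs), sub_zero]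
  have Aextadd : ∀ s t : ℝ, Aext (s + t) = Aext s + Aext t := by
    intro s t
    have key : A (s + t) + (A (-s) + A (-t)) = A (-(s + t)) + (A s + A t) := by
      rw [Amax (s + t), Amax (-s), Amax (-t), Amax (-(s + t)), Amax s, Amax t,
        ← Aadd _ _ (le_max_right _ _) (le_max_right _ _),
        ← Aadd _ _ (le_max_right _ _) (add_nonneg (le_max_right _ _) (le_max_right _ _)),
        ← Aadd _ _ (le_max_right _ _) (le_max_right _ _),
        ← Aadd _ _ (le_max_right _ _) (add_nonneg (le_max_right _ _) (le_max_right _ _))]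
      congr 1
      have hm : ∀ p : ℝ, max p 0 - max (-p) 0 = p := by
        intro p
        rcases le_total p 0 with h | h
        · rw [max_eq_right h, max_eq_left (by linarith)]; ring
        · rw [max_eq_left h, max_eq_right (by linarith)]; ring
      have m1 := hm (s + t)
      have m2 := hm s
      have m3 := hm t
      linarith
    apply eq_of_sub_eq_zero
    have habel : Aext (s + t) - (Aext s + Aext t)
        = A (s + t) + (A (-s) + A (-t)) - (A (-(s + t)) + (A s + A t)) := by
      simp only [hAe]; abel
    rw [habel, key, sub_self]
  have Aext0 : Aext 0 = 0 := by simp [hAe]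
  have Aneg : ∀ u : ℝ, Aext (-u) = -Aext u := by
    intro u
    have h := Aextadd u (-u)
    rw [add_neg_cancel, Aext0] at h
    exact eq_neg_of_add_eq_zero_right h.symm
  have gAe : ∀ u : E, f u + f (-u) = Aext (‖u‖ ^ 2) := by
    intro u; rw [AextEq _ (sq_nonneg _)]; exact gA u
  -- additivity along lines, nonnegative product case
  have line0 : ∀ (x : E) (s t : ℝ), 0 ≤ s * t →
      f ((s + t) • x) = f (s • x) + f (t • x) + Aext (s * t * ‖x‖ ^ 2) := by
    intro x s t hst
    obtain ⟨v, hv0, hvn⟩ := hOr x ‖x‖ (norm_nonneg x)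
    have hv0' : ⟪v, x⟫ = 0 := by rw [real_inner_comm]; exact hv0
    set c := Real.sqrt (s * t) with hc
    have hc2 : c ^ 2 = s * t := Real.sq_sqrt hst
    have hpq : ⟪s • x + c • v, t • x + -(c • v)⟫ = 0 := by
      simp only [inner_add_left, inner_add_right, inner_neg_right, real_inner_smul_left,
        real_inner_smul_right, real_inner_self_eq_norm_sq, hv0, hv0']
      have hvx : ‖v‖ ^ 2 = ‖x‖ ^ 2 := by rw [hvn]
      have hcv : ‖c • v‖ ^ 2 = c ^ 2 * ‖v‖ ^ 2 := by
        rw [norm_smul, mul_pow, Real.norm_eq_abs, sq_abs]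
      linear_combination (-1 : ℝ) * hcv + (-‖v‖ ^ 2) * hc2 + (-(s * t)) * hvx
    have key := hf _ _ hpq
    have hsum : s • x + c • v + (t • x + -(c • v)) = (s + t) • x := by module
    rw [hsum] at key
    have h1 := hf (s • x) (c • v)
      (by rw [real_inner_smul_left, real_inner_smul_right, hv0]; ring)
    have h2 := hf (t • x) (-(c • v))
      (by rw [inner_neg_right, real_inner_smul_left, real_inner_smul_right, hv0]; ring)
    have h3 : f (c • v) + f (-(c • v)) = Aext (s * t * ‖x‖ ^ 2) := by
      have hcv : ‖c • v‖ ^ 2 = s * t * ‖x‖ ^ 2 := by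
        rw [norm_smul, mul_pow, Real.norm_eq_abs, sq_abs, hc2, hvn]
      have := gAe (c • v); rwa [hcv] at this
    rw [key, h1, h2, ← h3]; abel
  -- additivity along lines, general case
  have line : ∀ (x : E) (s t : ℝ),
      f ((s + t) • x) = f (s • x) + f (t • x) + Aext (s * t * ‖x‖ ^ 2) := by
    have main : ∀ (x : E) (s t : ℝ), t ≤ 0 → 0 ≤ s →
        f ((s + t) • x) = f (s • x) + f (t • x) + Aext (s * t * ‖x‖ ^ 2) := by
      intro x s t ht hs
      rcases le_total 0 (s + t) with hr | hr
      · have h := line0 x (s + t) (-t) (by nlinarith)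
        rw [show s + t + -t = s by ring, neg_smul,
          show (s + t) * -t * ‖x‖ ^ 2 = -(s * t * ‖x‖ ^ 2) + -(t * t * ‖x‖ ^ 2) by ring,
          Aextadd, Aneg, Aneg] at h
        have hgt := gAe (t • x)
        have hnrm : ‖t • x‖ ^ 2 = t * t * ‖x‖ ^ 2 := by
          rw [norm_smul, mul_pow, Real.norm_eq_abs, sq_abs]; ring
        rw [hnrm] at hgt
        have e1 : f (-(t • x)) = Aext (t * t * ‖x‖ ^ 2) - f (t • x) :=
          eq_sub_of_add_eq' hgt
        rw [e1] at h
        rw [h]; abel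
      · have h := line0 x (s + t) (-s) (by nlinarith)
        rw [show s + t + -s = t by ring, neg_smul,
          show (s + t) * -s * ‖x‖ ^ 2 = -(s * t * ‖x‖ ^ 2) + -(s * s * ‖x‖ ^ 2) by ring,
          Aextadd, Aneg, Aneg] at h
        have hgs := gAe (s • x)
        have hnrm : ‖s • x‖ ^ 2 = s * s * ‖x‖ ^ 2 := by
          rw [norm_smul, mul_pow, Real.norm_eq_abs, sq_abs]; ring
        rw [hnrm] at hgs
        have e1 : f (-(s • x)) = Aext (s * s * ‖x‖ ^ 2) - f (s • x) :=
          eq_sub_of_add_eq' hgs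
        rw [e1] at h
        rw [h]; abel
    intro x s t
    rcases le_total 0 s with hs | hs
    · rcases le_total 0 t with ht | ht
      · exact line0 x s t (mul_nonneg hs ht)
      · exact main x s t ht hs
    · rcases le_total 0 t with ht | ht
      · have h := main x t s hs ht
        rw [show t + s = s + t by ring, show t * s = s * t by ring] at h
        rw [h]; abel
      · exact line0 x s t (by nlinarith)
  -- the key identity
  have crux : ∀ x y : E, f (x + y) = f x + f y + Aext ⟪x, y⟫ := by
    intro x y
    by_cases hx : x = 0
    · rw [hx]
      simp [h0, Aext0]
    · have hxn : (‖x‖ : ℝ) ≠ 0 := norm_ne_zero_iff.mpr hx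
      set α := ⟪x, y⟫ / ‖x‖ ^ 2 with hα
      set z := y - α • x with hz
      have hxz : ⟪x, z⟫ = 0 := by
        rw [hz, inner_sub_right, real_inner_smul_right, real_inner_self_eq_norm_sq, hα]
        field_simp
        ring
      have h1 : f (x + y) = f ((1 + α) • x) + f z := by
        have hxy : x + y = (1 + α) • x + z := by rw [hz]; module
        rw [hxy]
        exact hf _ _ (by rw [real_inner_smul_left, hxz, mul_zero])
      have h2 : f y = f (α • x) + f z := by
        have hy : y = α • x + z := by rw [hz]; module
        rw [hy]
        exact hf _ _ (by rw [real_inner_smul_left, hxz, mul_zero])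
      have h3 := line x 1 α
      rw [one_smul] at h3
      have hα2 : 1 * α * ‖x‖ ^ 2 = ⟪x, y⟫ := by rw [hα]; field_simp
      rw [hα2] at h3
      rw [h1, h3, h2]; abel
  -- assemble
  refine ⟨fun s => Aext (s / 2), fun x => f x - Aext (‖x‖ ^ 2 / 2), ?_, ?_, ?_⟩
  · intro s t
    show Aext ((s + t) / 2) = Aext (s / 2) + Aext (t / 2)
    rw [show (s + t) / 2 = s / 2 + t / 2 by ring, Aextadd]
  · intro x y
    show f (x + y) - Aext (‖x + y‖ ^ 2 / 2)
        = (f x - Aext (‖x‖ ^ 2 / 2)) + (f y - Aext (‖y‖ ^ 2 / 2))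
    have hn : ‖x + y‖ ^ 2 / 2 = ‖x‖ ^ 2 / 2 + (‖y‖ ^ 2 / 2 + ⟪x, y⟫) := by
      rw [norm_add_sq_real]; ring
    rw [crux x y, hn, Aextadd, Aextadd]; abel
  · intro x
    show f x = Aext (‖x‖ ^ 2 / 2) + (f x - Aext (‖x‖ ^ 2 / 2))
    abel
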